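/- Let σ² > 0, c ≥ 0, and let L, L': ℝ^d → ℝ be measurable functions such that e^{−L/σ²} and e^{−L'/σ²} are integrable and |L(θ) − L'(θ)| ≤ c for all θ ∈ ℝ^d. Let ν and ν' be the Gibbs probability measures with densities proportional to e^{−L/σ²} and e^{−L'/σ²} respectively. Then for every q > 1, R_q(ν ‖ ν') ≤ 2c/σ². -/

import Mathlib

open MeasureTheory
open scoped ENNReal

/-- Rényi divergence of order `q` of `μ` with respect to `ν`. -/
noncomputable def renyiDiv {α : Type*} [MeasurableSpace α] (q : ℝ) (μ ν : Measure α) : ℝ :=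
  (q - 1)⁻¹ * Real.log (∫ x, ((μ.rnDeriv ν x).toReal) ^ q ∂ν)

/-- The Gibbs probability measure on `ℝ^d` with potential `L` and noise parameter `σ²`:
density `e^{−L(θ)/σ²} / ∫ e^{−L/σ²} dθ` with respect to Lebesgue measure. -/
noncomputable def gibbs {d : ℕ} (σ2 : ℝ) (L : EuclideanSpace ℝ (Fin d) → ℝ) :
    Measure (EuclideanSpace ℝ (Fin d)) :=
  (ENNReal.ofReal (∫ θ, Real.exp (-(L θ) / σ2)))⁻¹ •
    volume.withDensity (fun θ => ENNReal.ofReal (Real.exp (-(L θ) / σ2)))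

theorem renyiDiv_gibbs_le_of_bounded_perturbation {d : ℕ} {σ2 c : ℝ}
    (hσ2 : 0 < σ2) (hc : 0 ≤ c)
    (L L' : EuclideanSpace ℝ (Fin d) → ℝ)
    (hLmeas : Measurable L) (hL'meas : Measurable L')
    (hLint : Integrable (fun θ => Real.exp (-(L θ) / σ2)))
    (hL'int : Integrable (fun θ => Real.exp (-(L' θ) / σ2)))
    (hbound : ∀ θ, |L θ - L' θ| ≤ c) :
    ∀ q : ℝ, 1 < q → renyiDiv q (gibbs σ2 L) (gibbs σ2 L') ≤ 2 * c / σ2 := by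
  intro q hq
  have hne : NeZero (volume : Measure (EuclideanSpace ℝ (Fin d))) := by
    constructor
    rw [← Measure.measure_univ_ne_zero]
    exact (IsOpen.measure_pos volume isOpen_univ Set.univ_nonempty).ne'
  set Z := ∫ θ, Real.exp (-(L θ) / σ2) with hZdef
  set Z' := ∫ θ, Real.exp (-(L' θ) / σ2) with hZ'def
  have hZ : 0 < Z := integral_exp_pos hLint
  have hZ' : 0 < Z' := integral_exp_pos hL'int
  set f : EuclideanSpace ℝ (Fin d) → ℝ≥0∞ :=
    fun θ => ENNReal.ofReal (Real.exp (-(L θ) / σ2)) with hfdef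
  set f' : EuclideanSpace ℝ (Fin d) → ℝ≥0∞ :=
    fun θ => ENNReal.ofReal (Real.exp (-(L' θ) / σ2)) with hf'def
  have hfmeas : Measurable f := by
    exact ENNReal.measurable_ofReal.comp ((hLmeas.neg.div_const σ2).exp)
  have hf'meas : Measurable f' := by
    exact ENNReal.measurable_ofReal.comp ((hL'meas.neg.div_const σ2).exp)
  -- the real density of ν with respect to ν'
  set h : EuclideanSpace ℝ (Fin d) → ℝ :=
    fun θ => (Z' / Z) * Real.exp ((L' θ - L θ) / σ2) with hhdef
  have hhnn : ∀ θ, 0 ≤ h θ := fun θ =>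
    mul_nonneg (div_nonneg hZ'.le hZ.le) (Real.exp_nonneg _)
  have hhmeas : Measurable h :=
    measurable_const.mul (((hL'meas.sub hLmeas).div_const σ2).exp)
  set g : EuclideanSpace ℝ (Fin d) → ℝ≥0∞ := fun θ => ENNReal.ofReal (h θ) with hgdef
  have hgmeas : Measurable g := ENNReal.measurable_ofReal.comp hhmeas
  -- ν = ν'.withDensity g
  have hkey : gibbs σ2 L = (gibbs σ2 L').withDensity g := by
    rw [gibbs, gibbs, withDensity_smul_measure, ← withDensity_mul _ hf'meas hgmeas]
    have hfg : f' * g = (ENNReal.ofReal (Z' / Z)) • f := by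
      funext θ
      show f' θ * g θ = ENNReal.ofReal (Z' / Z) * f θ
      rw [hf'def, hgdef, hhdef, hfdef]
      rw [← ENNReal.ofReal_mul (Real.exp_nonneg _), ← ENNReal.ofReal_mul]
      · congr 1
        rw [← mul_assoc, mul_comm (Real.exp _), mul_assoc, ← Real.exp_add]
        congr 2
        field_simp
        ring
      · exact div_nonneg hZ'.le hZ.le
    rw [hfg, withDensity_smul _ hfmeas, smul_smul]
    congr 1
    rw [div_eq_mul_inv, ENNReal.ofReal_mul hZ'.le, ENNReal.ofReal_inv_of_pos hZ, ← mul_assoc,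
      ENNReal.inv_mul_cancel (by rw [ne_eq, ENNReal.ofReal_eq_zero, not_le]; exact hZ') ENNReal.ofReal_ne_top, one_mul]
  -- both gibbs measures are probability measures
  have hprob : ∀ (K : EuclideanSpace ℝ (Fin d) → ℝ), Measurable K →
      Integrable (fun θ => Real.exp (-(K θ) / σ2)) → IsProbabilityMeasure (gibbs σ2 K) := by
    intro K hKm hKi
    constructor
    rw [gibbs, Measure.smul_apply, withDensity_apply _ MeasurableSet.univ,
      Measure.restrict_univ, smul_eq_mul]
    rw [← ofReal_integral_eq_lintegral_ofReal hKi (Filter.Eventually.of_forall fun θ =>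
      Real.exp_nonneg _)]
    exact ENNReal.inv_mul_cancel
      (by rw [ne_eq, ENNReal.ofReal_eq_zero, not_le]; exact integral_exp_pos hKi)
      ENNReal.ofReal_ne_top
  have hprobL := hprob L hLmeas hLint
  have hprobL' := hprob L' hL'meas hL'int
  -- Radon-Nikodym derivative
  have hrn : (gibbs σ2 L).rnDeriv (gibbs σ2 L') =ᵐ[gibbs σ2 L'] g := by
    rw [hkey]
    exact Measure.rnDeriv_withDensity _ hgmeas
  set M : ℝ := Real.exp (2 * c / σ2) with hMdef
  have hM1 : 1 ≤ M := Real.one_le_exp (by positivity)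
  have hM0 : 0 < M := lt_of_lt_of_le one_pos hM1
  -- pointwise bound h ≤ M
  have hZZ' : Z' / Z ≤ Real.exp (c / σ2) := by
    rw [div_le_iff₀ hZ]
    have : Z' ≤ ∫ θ, Real.exp (c / σ2) * Real.exp (-(L θ) / σ2) := by
      refine integral_mono hL'int (hLint.const_mul _) fun θ => ?_
      rw [← Real.exp_add, ← add_div]
      apply Real.exp_le_exp.mpr
      have h1 := (abs_le.mp (hbound θ)).2
      exact div_le_div_of_nonneg_right (by linarith) hσ2.le
    rwa [integral_const_mul] at this
  have hhle : ∀ θ, h θ ≤ M := by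
    intro θ
    have h2 : Real.exp ((L' θ - L θ) / σ2) ≤ Real.exp (c / σ2) := by
      apply Real.exp_le_exp.mpr
      have h2 := (abs_le.mp (hbound θ)).1
      exact div_le_div_of_nonneg_right (by linarith) hσ2.le
    calc h θ ≤ Real.exp (c / σ2) * Real.exp (c / σ2) :=
          mul_le_mul hZZ' h2 (Real.exp_nonneg _) (Real.exp_nonneg _)
      _ = M := by rw [← Real.exp_add, hMdef]; congr 1; ring
  -- integrability facts
  have hhint : Integrable h (gibbs σ2 L') := by
    refine (integrable_const M).mono' hhmeas.aestronglyMeasurable ?_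
    exact Filter.Eventually.of_forall fun θ => by
      rw [Real.norm_eq_abs, abs_of_nonneg (hhnn θ)]; exact hhle θ
  have hhqint : Integrable (fun θ => h θ ^ q) (gibbs σ2 L') := by
    refine (integrable_const (M ^ q)).mono'
      (((Real.continuous_rpow_const (by linarith : (0:ℝ) ≤ q)).measurable.comp hhmeas).aestronglyMeasurable) ?_
    refine Filter.Eventually.of_forall fun θ => ?_
    rw [Real.norm_eq_abs, abs_of_nonneg (Real.rpow_nonneg (hhnn θ) q)]
    exact Real.rpow_le_rpow (hhnn θ) (hhle θ) (by linarith)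
  -- integral of h is 1
  have hac : gibbs σ2 L ≪ gibbs σ2 L' := by
    rw [hkey]; exact withDensity_absolutelyContinuous _ _
  have hint_h : ∫ θ, h θ ∂(gibbs σ2 L') = 1 := by
    have := Measure.integral_toReal_rnDeriv hac
    rw [Measure.real, measure_univ, ENNReal.toReal_one] at this
    rw [← this]
    refine integral_congr_ae ?_
    filter_upwards [hrn] with θ hθ
    rw [hθ, hgdef, ENNReal.toReal_ofReal (hhnn θ)]
  -- the main integral bound
  have hIbound : ∫ θ, h θ ^ q ∂(gibbs σ2 L') ≤ M ^ (q - 1) := by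
    have hpw : ∀ θ, h θ ^ q ≤ M ^ (q - 1) * h θ := by
      intro θ
      rcases eq_or_lt_of_le (hhnn θ) with h0 | h0
      · rw [← h0, Real.zero_rpow (by linarith), mul_zero]
      · calc h θ ^ q = h θ ^ (q - 1) * h θ := by
              rw [← Real.rpow_add_one h0.ne' (q - 1)]; ring_nf
          _ ≤ M ^ (q - 1) * h θ := by
              apply mul_le_mul_of_nonneg_right _ (hhnn θ)
              exact Real.rpow_le_rpow (hhnn θ) (hhle θ) (by linarith)
    calc ∫ θ, h θ ^ q ∂(gibbs σ2 L')
        ≤ ∫ θ, M ^ (q - 1) * h θ ∂(gibbs σ2 L') :=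
          integral_mono hhqint (hhint.const_mul _) hpw
      _ = M ^ (q - 1) * ∫ θ, h θ ∂(gibbs σ2 L') := integral_const_mul _ _
      _ = M ^ (q - 1) := by rw [hint_h, mul_one]
  -- rewrite the Rényi divergence integral
  have hIeq : ∫ x, (((gibbs σ2 L).rnDeriv (gibbs σ2 L') x).toReal) ^ q ∂(gibbs σ2 L')
      = ∫ θ, h θ ^ q ∂(gibbs σ2 L') := by
    refine integral_congr_ae ?_
    filter_upwards [hrn] with θ hθ
    rw [hθ, hgdef, ENNReal.toReal_ofReal (hhnn θ)]
  rw [renyiDiv, hIeq]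
  have hlog : Real.log (∫ θ, h θ ^ q ∂(gibbs σ2 L')) ≤ (q - 1) * (2 * c / σ2) := by
    have hlogM : Real.log (M ^ (q - 1)) = (q - 1) * (2 * c / σ2) := by
      rw [Real.log_rpow hM0, hMdef, Real.log_exp]
    have hInn : 0 ≤ ∫ θ, h θ ^ q ∂(gibbs σ2 L') :=
      integral_nonneg fun θ => Real.rpow_nonneg (hhnn θ) q
    rcases eq_or_lt_of_le hInn with hI0 | hI0
    · rw [← hI0, Real.log_zero]
      exact mul_nonneg (by linarith) (by positivity)
    · rw [← hlogM]
      exact Real.log_le_log hI0 hIbound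
  calc (q - 1)⁻¹ * Real.log (∫ θ, h θ ^ q ∂(gibbs σ2 L'))
      ≤ (q - 1)⁻¹ * ((q - 1) * (2 * c / σ2)) := by
        apply mul_le_mul_of_nonneg_left hlog
        exact inv_nonneg.mpr (by linarith)
    _ = 2 * c / σ2 := by
        rw [← mul_assoc, inv_mul_cancel₀ (by linarith), one_mul]
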